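/- Let m ≥ 1 be a natural number and c ≥ 0 a real number. Then Γ((ν+m)/2) ν^{ν/2} (ν + c)^{-(ν+m)/2} / Γ(ν/2) tends to 2^{-m/2} e^{-c/2} as ν → +∞. -/

import Mathlib

open Real Filter Topology

private lemma gammaConvComb {p q t : ℝ} (hp : 0 < p) (hq : 0 < q) (ht0 : 0 ≤ t) (ht1 : t ≤ 1) :
    Real.Gamma (t * p + (1 - t) * q) ≤ Real.Gamma p ^ t * Real.Gamma q ^ (1 - t) := by
  have h := Real.convexOn_log_Gamma.2 (Set.mem_Ioi.mpr hp) (Set.mem_Ioi.mpr hq) ht0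
    (by linarith : (0:ℝ) ≤ 1 - t) (by ring : t + (1 - t) = 1)
  simp only [smul_eq_mul, Function.comp_apply] at h
  have hcomb : 0 < t * p + (1 - t) * q := by
    rcases ht0.eq_or_lt with h0 | h0
    · rw [← h0]; simpa using hq
    · nlinarith [mul_pos h0 hp, mul_nonneg (sub_nonneg.mpr ht1) hq.le]
  have h2 := Real.exp_le_exp.mpr h
  rwa [Real.exp_log (Real.Gamma_pos_of_pos hcomb), Real.exp_add,
    mul_comm t (log (Real.Gamma p)), mul_comm (1 - t) (log (Real.Gamma q)),
    Real.exp_mul, Real.exp_mul, Real.exp_log (Real.Gamma_pos_of_pos hp),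
    Real.exp_log (Real.Gamma_pos_of_pos hq)] at h2

private lemma wendel_upper {a x : ℝ} (ha0 : 0 ≤ a) (ha1 : a ≤ 1) (hx : 0 < x) :
    Real.Gamma (x + a) ≤ Real.Gamma x * x ^ a := by
  have h := gammaConvComb (p := x + 1) (q := x) (by linarith) hx ha0 ha1
  have hxa : a * (x + 1) + (1 - a) * x = x + a := by ring
  rw [hxa, Real.Gamma_add_one hx.ne'] at h
  have hG := Real.Gamma_pos_of_pos hx
  calc Real.Gamma (x + a) ≤ (x * Real.Gamma x) ^ a * Real.Gamma x ^ (1 - a) := h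
    _ = Real.Gamma x * x ^ a := by
        rw [Real.mul_rpow hx.le hG.le, mul_assoc, ← Real.rpow_add hG,
          show a + (1 - a) = 1 by ring, Real.rpow_one, mul_comm]

private lemma wendel_lower {a x : ℝ} (ha0 : 0 ≤ a) (ha1 : a ≤ 1) (hx : 0 < x) :
    Real.Gamma x * x ≤ Real.Gamma (x + a) * (x + a) ^ (1 - a) := by
  have hxa : 0 < x + a := by linarith
  have h := gammaConvComb (p := x + a) (q := x + a + 1) hxa (by linarith) ha0 ha1
  have hcomb : a * (x + a) + (1 - a) * (x + a + 1) = x + 1 := by ring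
  rw [hcomb, Real.Gamma_add_one hx.ne', Real.Gamma_add_one hxa.ne'] at h
  have hG := Real.Gamma_pos_of_pos hxa
  calc Real.Gamma x * x = x * Real.Gamma x := mul_comm _ _
    _ ≤ Real.Gamma (x + a) ^ a * ((x + a) * Real.Gamma (x + a)) ^ (1 - a) := h
    _ = Real.Gamma (x + a) * (x + a) ^ (1 - a) := by
        rw [Real.mul_rpow hxa.le hG.le, ← mul_assoc, mul_comm (Real.Gamma (x+a) ^ a),
          mul_assoc _ (Real.Gamma (x+a) ^ a), ← Real.rpow_add hG,
          show a + (1 - a) = 1 by ring, Real.rpow_one, mul_comm]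

private lemma div_add_tendsto (a : ℝ) :
    Tendsto (fun x : ℝ => x / (x + a)) atTop (𝓝 1) := by
  have h2 : Tendsto (fun x : ℝ => a / (x + a)) atTop (𝓝 0) :=
    tendsto_const_nhds.div_atTop (tendsto_atTop_add_const_right _ a tendsto_id)
  have h3 := (tendsto_const_nhds (x := (1:ℝ)) (f := atTop)).sub h2
  rw [sub_zero] at h3
  refine h3.congr' ?_
  filter_upwards [eventually_gt_atTop (max 0 (-a))] with x hx
  have hxa : 0 < x + a := by
    have h0 := (le_max_left 0 (-a)).trans_lt hx
    have h1 := (le_max_right 0 (-a)).trans_lt hx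
    linarith
  field_simp
  ring

private lemma ratio_tendsto_base {a : ℝ} (ha0 : 0 ≤ a) (ha1 : a ≤ 1) :
    Tendsto (fun x => Real.Gamma (x + a) / (Real.Gamma x * x ^ a)) atTop (𝓝 1) := by
  have hlow : Tendsto (fun x : ℝ => (x / (x + a)) ^ (1 - a)) atTop (𝓝 1) := by
    have h := (div_add_tendsto a).rpow_const (p := 1 - a) (Or.inr (by linarith))
    simpa using h
  refine tendsto_of_tendsto_of_tendsto_of_le_of_le' hlow tendsto_const_nhds ?_ ?_
  · filter_upwards [eventually_gt_atTop 0] with x hx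
    have hxa : 0 < x + a := by linarith
    have hG := Real.Gamma_pos_of_pos hx
    rw [le_div_iff₀ (by positivity)]
    have hx1 : x ^ (1 - a) * x ^ a = x := by
      rw [← Real.rpow_add hx, show 1 - a + a = 1 by ring, Real.rpow_one]
    have e : (x / (x + a)) ^ (1 - a) * (Real.Gamma x * x ^ a)
        = Real.Gamma x * x / (x + a) ^ (1 - a) := by
      rw [Real.div_rpow hx.le hxa.le, div_mul_eq_mul_div]
      congr 1
      rw [mul_comm (Real.Gamma x) (x ^ a), ← mul_assoc, hx1, mul_comm]
    rw [e, div_le_iff₀ (Real.rpow_pos_of_pos hxa _)]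
    exact wendel_lower ha0 ha1 hx
  · filter_upwards [eventually_gt_atTop 0] with x hx
    have hG := Real.Gamma_pos_of_pos hx
    rw [div_le_one (by positivity)]
    exact wendel_upper ha0 ha1 hx

private lemma ratio_tendsto_aux : ∀ (n : ℕ) (a : ℝ), 0 ≤ a → a ≤ n →
    Tendsto (fun x => Real.Gamma (x + a) / (Real.Gamma x * x ^ a)) atTop (𝓝 1) := by
  intro n
  induction n with
  | zero =>
    intro a ha0 ha1
    have ha : a = 0 := le_antisymm (by exact_mod_cast ha1) ha0
    subst ha
    refine tendsto_const_nhds.congr' ?_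
    filter_upwards [eventually_gt_atTop 0] with x hx
    have hG := Real.Gamma_pos_of_pos hx
    simp [Real.rpow_zero, hG.ne']
  | succ n ih =>
    intro a ha0 han
    by_cases hle : a ≤ 1
    · exact ratio_tendsto_base ha0 hle
    · push_neg at hle
      have h2 : Tendsto (fun x : ℝ => (x + (a - 1)) / x) atTop (𝓝 1) := by
        have h3 : Tendsto (fun x : ℝ => (a - 1) / x) atTop (𝓝 0) :=
          tendsto_const_nhds.div_atTop tendsto_id
        have h4 := (tendsto_const_nhds (x := (1:ℝ)) (f := atTop)).add h3
        rw [add_zero] at h4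
        refine h4.congr' ?_
        filter_upwards [eventually_gt_atTop 0] with x hx
        field_simp
      have han' : a - 1 ≤ n := by
        have : a ≤ n + 1 := by exact_mod_cast han
        linarith
      have h1 := (ih (a - 1) (by linarith) han').mul h2
      rw [mul_one] at h1
      refine h1.congr' ?_
      filter_upwards [eventually_gt_atTop 0] with x hx
      have hxa1 : 0 < x + (a - 1) := by linarith
      have hG := Real.Gamma_pos_of_pos hx
      have hGe : Real.Gamma (x + a) = (x + (a - 1)) * Real.Gamma (x + (a - 1)) := by
        rw [show x + a = (x + (a - 1)) + 1 by ring, Real.Gamma_add_one hxa1.ne']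
      have hxpow : x ^ a = x ^ (a - 1) * x := by
        rw [← Real.rpow_add_one hx.ne']; ring_nf
      rw [hGe, hxpow]
      have hp := Real.rpow_pos_of_pos hx (a - 1)
      field_simp

private lemma ratio_tendsto {a : ℝ} (ha : 0 ≤ a) :
    Tendsto (fun x => Real.Gamma (x + a) / (Real.Gamma x * x ^ a)) atTop (𝓝 1) :=
  ratio_tendsto_aux ⌈a⌉₊ a ha (Nat.le_ceil a)

/-- The Student-t integrated likelihood kernel converges to the Gaussian one as the
degrees of freedom ν → ∞. -/
theorem stmt11 (m : ℕ) (hm : 1 ≤ m) (c : ℝ) (hc : 0 ≤ c) :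
    Tendsto
      (fun ν : ℝ => Real.Gamma ((ν + m) / 2) * ν ^ (ν / 2) * (ν + c) ^ (-(ν + m) / 2) /
        Real.Gamma (ν / 2))
      atTop (nhds ((2 : ℝ) ^ (-(m : ℝ) / 2) * Real.exp (-c / 2))) := by
  -- First factor: Gamma ratio
  have T1 : Tendsto (fun ν : ℝ =>
      Real.Gamma (ν / 2 + (m : ℝ) / 2) / (Real.Gamma (ν / 2) * (ν / 2) ^ ((m : ℝ) / 2)))
      atTop (𝓝 1) := by
    have hhalf : Tendsto (fun ν : ℝ => ν / 2) atTop atTop :=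
      tendsto_id.atTop_div_const two_pos
    exact (ratio_tendsto (a := (m : ℝ) / 2) (by positivity)).comp hhalf
  -- Third factor: (ν/(ν+c))^((ν+m)/2) → exp(-c/2)
  have T3 : Tendsto (fun ν : ℝ => (ν / (ν + c)) ^ ((ν + m) / 2)) atTop (𝓝 (exp (-c / 2))) := by
    have hg : Tendsto (fun u : ℝ => (1 + -c / u) ^ u) atTop (𝓝 (exp (-c))) :=
      tendsto_one_add_div_rpow_exp (-c)
    have hgc : Tendsto (fun ν : ℝ => (1 + -c / (ν + c)) ^ (ν + c)) atTop (𝓝 (exp (-c))) :=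
      hg.comp (tendsto_atTop_add_const_right _ c tendsto_id)
    have hA : Tendsto (fun ν : ℝ => (ν / (ν + c)) ^ (ν + c)) atTop (𝓝 (exp (-c))) := by
      refine hgc.congr' ?_
      filter_upwards [eventually_gt_atTop 0] with ν hν
      have hνc : 0 < ν + c := by linarith
      congr 1
      field_simp
      ring
    have hB := hA.rpow_const (p := 1 / 2) (Or.inr (by norm_num))
    have hBval : exp (-c) ^ ((1:ℝ) / 2) = exp (-c / 2) := by
      rw [← Real.exp_mul]; congr 1; ring
    rw [hBval] at hB
    have hC : Tendsto (fun ν : ℝ => (ν / (ν + c)) ^ (((m : ℝ) - c) / 2)) atTop (𝓝 1) := by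
      have h := (div_add_tendsto c).rpow_const (p := ((m : ℝ) - c) / 2) (Or.inl one_ne_zero)
      simpa using h
    have h := hB.mul hC
    rw [mul_one] at h
    refine h.congr' ?_
    filter_upwards [eventually_gt_atTop 0] with ν hν
    have hνc : 0 < ν + c := by linarith
    have hb : 0 < ν / (ν + c) := by positivity
    rw [← Real.rpow_mul hb.le, ← Real.rpow_add hb]
    congr 1
    ring
  -- assemble
  have hfin := T1.mul (T3.const_mul ((2 : ℝ) ^ (-(m : ℝ) / 2)))
  rw [one_mul] at hfin
  refine hfin.congr' ?_
  filter_upwards [eventually_gt_atTop 0] with ν hν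
  have hνc : 0 < ν + c := by linarith
  have hG := Real.Gamma_pos_of_pos (show (0:ℝ) < ν / 2 by linarith)
  have e1 : ν / 2 + (m : ℝ) / 2 = (ν + m) / 2 := by ring
  have e2 : (ν / 2) ^ ((m : ℝ) / 2) = ν ^ ((m : ℝ) / 2) / 2 ^ ((m : ℝ) / 2) :=
    Real.div_rpow hν.le (by norm_num : (0:ℝ) ≤ 2) _
  have e3 : (2 : ℝ) ^ (-(m : ℝ) / 2) = ((2 : ℝ) ^ ((m : ℝ) / 2))⁻¹ := by
    rw [neg_div, Real.rpow_neg (by norm_num : (0:ℝ) ≤ 2)]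
  have e4 : (ν / (ν + c)) ^ ((ν + m) / 2)
      = ν ^ (ν / 2) * ν ^ ((m : ℝ) / 2) / (ν + c) ^ ((ν + m) / 2) := by
    rw [Real.div_rpow hν.le hνc.le]
    congr 1
    rw [show (ν + (m : ℝ)) / 2 = ν / 2 + (m : ℝ) / 2 by ring, Real.rpow_add hν]
  have e5 : (ν + c) ^ (-(ν + m) / 2) = ((ν + c) ^ ((ν + m) / 2))⁻¹ := by
    rw [neg_div, Real.rpow_neg hνc.le]
  rw [e1, e2, e3, e4, e5]
  have p1 : (0:ℝ) < ν ^ ((m : ℝ) / 2) := Real.rpow_pos_of_pos hν _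
  have p2 : (0:ℝ) < (2:ℝ) ^ ((m : ℝ) / 2) := Real.rpow_pos_of_pos (by norm_num) _
  have p3 : (0:ℝ) < (ν + c) ^ ((ν + m) / 2) := Real.rpow_pos_of_pos hνc _
  field_simp
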